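/- arXiv:1202.3311 — 3 statements merged into one kernel-verified Lean document; each statement's English description precedes it below -/
import Mathlib

section
/- Let q ≥ 2, let 𝒯 be an SLP representing T with |T| ≥ q, and let X_{i_1}, …, X_{i_m} be variables such that the node ξ(1,q) is labeled X_{i_1} and, for each 2 ≤ j ≤ m, X_{i_j} is a right q-gram neighbor of X_{i_{j-1}}. Let W = T([1:q-1]) label(X_{i_1}) label(X_{i_2}) ⋯ label(X_{i_m}), and for 1 ≤ j ≤ m let B_j denote the set of positions of W lying in the block label(X_{i_j}) of this concatenation. Then for every string P of length q and every 1 ≤ j ≤ m, the number of occurrences k ∈ Occ(W,P) with ending position k+q-1 in B_j equals |Occ(t_{i_j}, P)|. Consequently, the weighted q-gram frequencies on W, where an occurrence of a q-gram ending in B_j is weighted by vOcc(X_{i_j}), equal the weighted q-gram frequencies of the strings t_{i_1}, …, t_{i_m} where each q-gram occurrence in t_{i_j} is weighted by vOcc(X_{i_j}): Σ_{j=1}^m vOcc(X_{i_j}) · |{k ∈ Occ(W,P) : k+q-1 ∈ B_j}| = Σ_{j=1}^m vOcc(X_{i_j}) · |Occ(t_{i_j}, P)|. -/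
/-- A straight line program over alphabet `α`: variables are `Fin n` (variable
`X_i` of the paper corresponds to index `i-1`), each with either a terminal
rule (a single character) or a nonterminal rule `X_i → X_j X_k` with `j,k < i`. -/
structure SLP (α : Type) where
  n : ℕ
  npos : 0 < n
  rule : Fin n → α ⊕ (Fin n × Fin n)
  wf : ∀ i jk, rule i = Sum.inr jk → jk.1 < i ∧ jk.2 < i

namespace SLP

variable {α : Type}

/-- the string `val(X_i)` derived by a variable -/
def val (S : SLP α) (i : Fin S.n) : List α :=
  match h : S.rule i with
  | Sum.inl a => [a]
  | Sum.inr jk =>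
    have _h1 := (S.wf i jk h).1
    have _h2 := (S.wf i jk h).2
    S.val jk.1 ++ S.val jk.2
termination_by i.val

/-- the last variable `X_n` -/
def lastIdx (S : SLP α) : Fin S.n := ⟨S.n - 1, Nat.sub_lt S.npos Nat.one_pos⟩

/-- the string `T` represented by the SLP -/
def text (S : SLP α) : List α := S.val S.lastIdx

/-- `T([i:j])`: the (1-based, inclusive) substring of a string -/
def substr (T : List α) (i j : ℕ) : List α := (T.drop (i - 1)).take (j + 1 - i)

/-- `pre(T,q)` -/
def spre (T : List α) (q : ℕ) : List α := T.take q

/-- `suf(T,q)` -/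
def ssuf (T : List α) (q : ℕ) : List α := T.drop (T.length - q)

/-- `pre([b:e],q)` for intervals of positions -/
def ipre (b e q : ℕ) : Finset ℕ := Finset.Icc b (min (b + q - 1) e)

/-- `suf([b:e],q)` for intervals of positions -/
def isuf (b e q : ℕ) : Finset ℕ := Finset.Icc (max b (e + 1 - q)) e

/-- `Occ(T,P)`: the set of (1-based) occurrences of `P` in `T` -/
def Occ [DecidableEq α] (T P : List α) : Finset ℕ :=
  (Finset.Icc 1 T.length).filter fun k => substr T k (k + P.length - 1) = P

/-- the multiset of labels of the nodes of the derivation tree rooted at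
a node labeled `X_i` -/
def occsFrom (S : SLP α) (i : Fin S.n) : Multiset (Fin S.n) :=
  match h : S.rule i with
  | Sum.inl _ => {i}
  | Sum.inr jk =>
    have _h1 := (S.wf i jk h).1
    have _h2 := (S.wf i jk h).2
    i ::ₘ (S.occsFrom jk.1 + S.occsFrom jk.2)
termination_by i.val

/-- `vOcc(X_i)`: the number of nodes of the derivation tree labeled `X_i` -/
def vOcc (S : SLP α) (i : Fin S.n) : ℕ := (S.occsFrom S.lastIdx).count i

/-- the string `t_i = suf(val(X_{ℓ(i)}),q-1) pre(val(X_{r(i)}),q-1)`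
(and `[]` for a terminal rule) -/
def tstr (S : SLP α) (q : ℕ) (i : Fin S.n) : List α :=
  match S.rule i with
  | Sum.inl _ => []
  | Sum.inr jk => ssuf (S.val jk.1) (q - 1) ++ spre (S.val jk.2) (q - 1)

/-- `label(X_i) = t_i([q:|t_i|])` -/
def labelStr (S : SLP α) (q : ℕ) (i : Fin S.n) : List α := (S.tstr q i).drop (q - 1)

/-- Nodes of the derivation tree are represented by the path from the root
(`false` = go to left child, `true` = go to right child).  `descend i p`
returns the label of the node reached from a node labeled `X_i` by path `p`. -/
def descend (S : SLP α) : Fin S.n → List Bool → Option (Fin S.n)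
  | i, [] => some i
  | i, b :: p =>
    match S.rule i with
    | Sum.inl _ => none
    | Sum.inr jk => S.descend (if b then jk.2 else jk.1) p

/-- the label of the node of the derivation tree reached by path `p` from the root -/
def nodeVar (S : SLP α) (p : List Bool) : Option (Fin S.n) := S.descend S.lastIdx p

/-- `p` is a valid node of the derivation tree -/
def IsNode (S : SLP α) (p : List Bool) : Prop := (S.nodeVar p).isSome

/-- the 0-based offset in `val(X_i)` of the part derived below path `p` -/
def offsetFrom (S : SLP α) : Fin S.n → List Bool → ℕ
  | _, [] => 0
  | i, b :: p =>
    match S.rule i with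
    | Sum.inl _ => 0
    | Sum.inr jk =>
      if b then (S.val jk.1).length + S.offsetFrom jk.2 p
      else S.offsetFrom jk.1 p

/-- the 0-based offset in `T` of the interval derived by node `p` -/
def offset (S : SLP α) (p : List Bool) : ℕ := S.offsetFrom S.lastIdx p

/-- `itv(v)`: the (1-based) interval of positions of `T` derived by node `p` -/
def itv (S : SLP α) (p : List Bool) : Finset ℕ :=
  match S.nodeVar p with
  | some i => Finset.Icc (S.offset p + 1) (S.offset p + (S.val i).length)
  | none => ∅

/-- `p = ξ(b,e)`: `p` is the deepest node whose interval contains `[b:e]`,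
i.e. `itv(p) ⊇ [b:e]` and no proper descendant of `p` satisfies this. -/
def Stabs (S : SLP α) (p : List Bool) (b e : ℕ) : Prop :=
  S.IsNode p ∧ Finset.Icc b e ⊆ S.itv p ∧
  ∀ p' : List Bool, p <+: p' → p ≠ p' → S.IsNode p' → ¬ Finset.Icc b e ⊆ S.itv p'

/-- `X_j` is a right `q`-gram neighbor of `X_i` -/
def RightNbr (S : SLP α) (q : ℕ) (i j : Fin S.n) : Prop :=
  i ≠ j ∧ ∃ u p p', 1 ≤ u ∧ u + q ≤ S.text.length ∧
    S.Stabs p u (u + q - 1) ∧ S.nodeVar p = some i ∧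
    S.Stabs p' (u + 1) (u + q) ∧ S.nodeVar p' = some j

/-- `lm_q(X_i)`: the last variable of length `≥ q` on the sequence `i, ℓ(i), ℓ(ℓ(i)), …`
(meaningful when `|val(X_i)| ≥ q`) -/
def lm (S : SLP α) (q : ℕ) (i : Fin S.n) : Fin S.n :=
  match h : S.rule i with
  | Sum.inl _ => i
  | Sum.inr jk =>
    have := (S.wf i jk h).1
    if (S.val jk.1).length < q then i else S.lm q jk.1
termination_by i.val

/-- `rm_q(X_i)`: the last variable of length `≥ q` on the sequence `i, r(i), r(r(i)), …` -/
def rm (S : SLP α) (q : ℕ) (i : Fin S.n) : Fin S.n :=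
  match h : S.rule i with
  | Sum.inl _ => i
  | Sum.inr jk =>
    have := (S.wf i jk h).2
    if (S.val jk.2).length < q then i else S.rm q jk.2
termination_by i.val

/-- `lm_q` returning `null` (`none`) when `|val(X_i)| < q` -/
def lmOpt (S : SLP α) (q : ℕ) (i : Fin S.n) : Option (Fin S.n) :=
  if (S.val i).length < q then none else some (S.lm q i)

/-- `rm_q` returning `null` (`none`) when `|val(X_i)| < q` -/
def rmOpt (S : SLP α) (q : ℕ) (i : Fin S.n) : Option (Fin S.n) :=
  if (S.val i).length < q then none else some (S.rm q i)

/-- `LSpine S i k`: `k` occurs in the sequence `i, ℓ(i), ℓ(ℓ(i)), …`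
(the leftmost path of the derivation subtree rooted at a node labeled `X_i`) -/
inductive LSpine (S : SLP α) : Fin S.n → Fin S.n → Prop
  | refl (i : Fin S.n) : LSpine S i i
  | step {i k : Fin S.n} {jk : Fin S.n × Fin S.n} :
      S.rule i = Sum.inr jk → LSpine S jk.1 k → LSpine S i k

end SLP

namespace SLP
variable {α : Type}

lemma val_inl (S : SLP α) {i : Fin S.n} {a : α} (h : S.rule i = Sum.inl a) :
    S.val i = [a] := by
  rw [val]
  split
  · rename_i h'; rw [h] at h'; cases h'; rfl
  · rename_i h'; rw [h] at h'; cases h'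

lemma val_inr (S : SLP α) {i : Fin S.n} {jk : Fin S.n × Fin S.n}
    (h : S.rule i = Sum.inr jk) : S.val i = S.val jk.1 ++ S.val jk.2 := by
  rw [val]
  split
  · rename_i h'; rw [h] at h'; cases h'
  · rename_i h'; rw [h] at h'; cases h'; rfl

lemma descend_spec (S : SLP α) :
    ∀ (p : List Bool) (i j : Fin S.n), S.descend i p = some j →
      S.offsetFrom i p + (S.val j).length ≤ (S.val i).length ∧
      ((S.val i).drop (S.offsetFrom i p)).take (S.val j).length = S.val j := by
  intro p
  induction p with
  | nil =>
    intro i j h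
    simp [descend] at h
    subst h
    simp [offsetFrom]
  | cons b p ih =>
    intro i j h
    rw [descend] at h
    rcases hr : S.rule i with a | jk
    · rw [hr] at h; cases h
    · rw [hr] at h
      have hval := S.val_inr hr
      have hlen : (S.val i).length = (S.val jk.1).length + (S.val jk.2).length := by
        rw [hval]; simp
      rcases ih _ _ h with ⟨h1, h2⟩
      cases b with
      | false =>
        simp only [Bool.false_eq_true, if_false] at h1 h2 ⊢
        have ho : S.offsetFrom i (false :: p) = S.offsetFrom jk.1 p := by
          rw [offsetFrom, hr]; simp
        rw [ho]
        constructor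
        · omega
        · rw [hval, List.drop_append_of_le_length (by omega),
            List.take_append_of_le_length (by simp; omega), h2]
      | true =>
        simp only [if_true] at h1 h2 ⊢
        have ho : S.offsetFrom i (true :: p) =
            (S.val jk.1).length + S.offsetFrom jk.2 p := by
          rw [offsetFrom, hr]; simp
        rw [ho]
        constructor
        · omega
        · rw [hval, List.drop_length_add_append, h2]

lemma descend_append_eq (S : SLP α) :
    ∀ (p₁ p₂ : List Bool) (i : Fin S.n),
      S.descend i (p₁ ++ p₂) = (S.descend i p₁).bind fun k => S.descend k p₂ := by
  intro p₁
  induction p₁ with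
  | nil => intro p₂ i; simp [descend]
  | cons b p ih =>
    intro p₂ i
    rw [List.cons_append, descend, descend]
    rcases hr : S.rule i with a | jk
    · rfl
    · exact ih _ _

lemma offsetFrom_append (S : SLP α) :
    ∀ (p₁ p₂ : List Bool) (i k : Fin S.n), S.descend i p₁ = some k →
      S.offsetFrom i (p₁ ++ p₂) = S.offsetFrom i p₁ + S.offsetFrom k p₂ := by
  intro p₁
  induction p₁ with
  | nil =>
    intro p₂ i k h
    simp [descend] at h
    subst h
    simp [offsetFrom]
  | cons b p ih =>
    intro p₂ i k h
    rw [descend] at h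
    rcases hr : S.rule i with a | jk
    · rw [hr] at h; cases h
    · rw [hr] at h
      rw [List.cons_append, offsetFrom, offsetFrom, hr]
      cases b with
      | false =>
        have h' : S.descend jk.1 p = some k := h
        simpa using ih p₂ _ _ h'
      | true =>
        have h' : S.descend jk.2 p = some k := h
        simp only [if_true]
        rw [ih p₂ _ _ h']
        omega


lemma val_length_pos (S : SLP α) (i : Fin S.n) : 0 < (S.val i).length := by
  rcases h : S.rule i with a | jk
  · rw [S.val_inl h]; simp
  · have _h1 := (S.wf i jk h).1
    rw [S.val_inr h]
    have := S.val_length_pos jk.1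
    simp only [List.length_append]
    omega
termination_by i.val

lemma nodeVar_spec (S : SLP α) {p : List Bool} {i : Fin S.n}
    (h : S.nodeVar p = some i) :
    S.offset p + (S.val i).length ≤ S.text.length ∧
    (S.text.drop (S.offset p)).take (S.val i).length = S.val i :=
  S.descend_spec p _ i h

lemma child_node (S : SLP α) {p : List Bool} {k : Fin S.n} {jk : Fin S.n × Fin S.n}
    (h : S.nodeVar p = some k) (hr : S.rule k = Sum.inr jk) (b : Bool) :
    S.nodeVar (p ++ [b]) = some (if b then jk.2 else jk.1) ∧
    S.offset (p ++ [b]) = S.offset p + (if b then (S.val jk.1).length else 0) := by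
  have h1 : S.descend k [b] = some (if b then jk.2 else jk.1) := by
    rw [descend, hr]
    cases b <;> simp [descend]
  have h2 : S.offsetFrom k [b] = (if b then (S.val jk.1).length else 0) := by
    rw [offsetFrom, hr]
    cases b <;> simp [offsetFrom]
  constructor
  · rw [nodeVar, descend_append_eq]
    rw [nodeVar] at h
    rw [h, Option.bind_some, h1]
  · rw [offset, S.offsetFrom_append p [b] _ k h, h2]
    rfl

lemma itv_eq (S : SLP α) {p : List Bool} {i : Fin S.n} (h : S.nodeVar p = some i) :
    S.itv p = Finset.Icc (S.offset p + 1) (S.offset p + (S.val i).length) := by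
  rw [itv, h]

lemma isNode_of_mem_itv (S : SLP α) {p : List Bool} {x : ℕ} (h : x ∈ S.itv p) :
    ∃ i, S.nodeVar p = some i := by
  rw [itv] at h
  rcases hv : S.nodeVar p with _ | i
  · rw [hv] at h; simp at h
  · exact ⟨i, rfl⟩

lemma nest (S : SLP α) {p p' : List Bool} {i' : Fin S.n}
    (hpre : p <+: p') (h' : S.nodeVar p' = some i') :
    ∃ k, S.nodeVar p = some k ∧ S.offset p ≤ S.offset p' ∧
      S.offset p' + (S.val i').length ≤ S.offset p + (S.val k).length := by
  obtain ⟨s, rfl⟩ := hpre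
  rw [nodeVar, descend_append_eq] at h'
  rcases hk : S.descend S.lastIdx p with _ | k
  · rw [hk] at h'; cases h'
  · rw [hk, Option.bind_some] at h'
    refine ⟨k, hk, ?_, ?_⟩
    · rw [offset, offset, S.offsetFrom_append p s _ k hk]; omega
    · have := (S.descend_spec s k i' h').1
      rw [offset, offset, S.offsetFrom_append p s _ k hk]
      omega

lemma itv_mono (S : SLP α) {p p' : List Bool} {x : ℕ}
    (hpre : p <+: p') (hx : x ∈ S.itv p') : x ∈ S.itv p := by
  obtain ⟨i', h'⟩ := S.isNode_of_mem_itv hx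
  obtain ⟨k, hk, h1, h2⟩ := S.nest hpre h'
  rw [S.itv_eq h', Finset.mem_Icc] at hx
  rw [S.itv_eq hk, Finset.mem_Icc]
  omega

lemma list_fork : ∀ (p p' : List Bool), ¬ p <+: p' → ¬ p' <+: p →
    ∃ r b s s', p = r ++ b :: s ∧ p' = r ++ (!b) :: s' := by
  intro p
  induction p with
  | nil => intro p' h _; exact absurd (List.nil_prefix) h
  | cons a p ih =>
    intro p' h h'
    rcases p' with _ | ⟨a', p₂'⟩
    · exact absurd (List.nil_prefix) h'
    · by_cases hab : a = a'
      · subst hab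
        rw [List.cons_prefix_cons] at h h'
        simp only [true_and] at h h'
        obtain ⟨r, b, s, s', hp, hp'⟩ := ih p₂' h h'
        exact ⟨a :: r, b, s, s', by simp [hp], by simp [hp']⟩
      · refine ⟨[], a, p, p₂', by simp, ?_⟩
        simp only [List.nil_append]
        cases a <;> cases a' <;> simp_all

lemma comparable (S : SLP α) {p p' : List Bool} {x : ℕ}
    (h : x ∈ S.itv p) (h' : x ∈ S.itv p') : p <+: p' ∨ p' <+: p := by
  by_contra hc
  push_neg at hc
  obtain ⟨r, b, s, s', hp, hp'⟩ := list_fork p p' hc.1 hc.2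
  -- x belongs to itv (r ++ [b]) and itv (r ++ [!b])
  have hx1 : x ∈ S.itv (r ++ [b]) := by
    refine S.itv_mono ?_ h
    rw [hp]; exact ⟨s, by simp⟩
  have hx2 : x ∈ S.itv (r ++ [!b]) := by
    refine S.itv_mono ?_ h'
    rw [hp']; exact ⟨s', by simp⟩
  obtain ⟨i1, hv1⟩ := S.isNode_of_mem_itv hx1
  -- nodeVar r is some k with rule inr
  have hr' : ∃ k, S.nodeVar r = some k ∧ ∃ jk, S.rule k = Sum.inr jk := by
    rw [nodeVar, descend_append_eq] at hv1
    rcases hk : S.descend S.lastIdx r with _ | k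
    · rw [hk] at hv1; cases hv1
    · rw [hk, Option.bind_some, descend] at hv1
      rcases hrk : S.rule k with a | jk
      · rw [hrk] at hv1; cases hv1
      · exact ⟨k, hk, jk, hrk⟩
  obtain ⟨k, hk, jk, hrk⟩ := hr'
  have c0 := S.child_node hk hrk false
  have c1 := S.child_node hk hrk true
  have l1 : 0 < (S.val jk.1).length := S.val_length_pos jk.1
  have hxf : x ∈ S.itv (r ++ [false]) := by cases b; exact hx1; exact hx2
  have hxt : x ∈ S.itv (r ++ [true]) := by cases b; exact hx2; exact hx1
  rw [S.itv_eq c0.1, Finset.mem_Icc] at hxf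
  rw [S.itv_eq c1.1, Finset.mem_Icc] at hxt
  simp only [Bool.false_eq_true, if_false, if_true, ite_true, ite_false] at hxf hxt c0 c1
  rw [c0.2] at hxf
  rw [c1.2] at hxt
  omega


lemma substr_append (T : List α) {a c b : ℕ} (ha : 1 ≤ a) (hac : a ≤ c + 1)
    (hcb : c ≤ b) : substr T a b = substr T a c ++ substr T (c + 1) b := by
  rw [substr, substr, substr]
  have h : b + 1 - a = (c + 1 - a) + (b - c) := by omega
  rw [h, List.take_add]
  congr 1
  rw [List.drop_drop]
  have e1 : (a - 1) + (c + 1 - a) = c + 1 - 1 := by omega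
  have e2 : b - c = b + 1 - (c + 1) := by omega
  rw [e1, e2]

lemma stab_window (S : SLP α) {q u : ℕ} {p : List Bool} {i : Fin S.n}
    (hq : 2 ≤ q) (hu : 1 ≤ u)
    (hs : S.Stabs p u (u + q - 1)) (hv : S.nodeVar p = some i) :
    ∃ jk : Fin S.n × Fin S.n, S.rule i = Sum.inr jk ∧
      S.offset p + 1 ≤ u ∧ u ≤ S.offset p + (S.val jk.1).length ∧
      S.offset p + (S.val jk.1).length + 1 ≤ u + q - 1 ∧
      u + q - 1 ≤ S.offset p + (S.val i).length ∧
      S.offset p + (S.val i).length ≤ S.text.length ∧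
      S.tstr q i = substr S.text
        (max (S.offset p + 1) (S.offset p + (S.val jk.1).length + 2 - q))
        (min (S.offset p + (S.val jk.1).length + q - 1)
          (S.offset p + (S.val i).length)) := by
  obtain ⟨hnode, hsub, hdeep⟩ := hs
  have hicc : u ≤ u + q - 1 := by omega
  rw [S.itv_eq hv, Finset.Icc_subset_Icc_iff hicc] at hsub
  have hspec := S.nodeVar_spec hv
  rcases hr : S.rule i with a | jk
  · exfalso
    rw [S.val_inl hr] at hsub
    simp at hsub
    omega
  · have hlen : (S.val i).length = (S.val jk.1).length + (S.val jk.2).length := by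
      rw [S.val_inr hr]; simp
    have c0 := S.child_node hv hr false
    have c1 := S.child_node hv hr true
    simp only [Bool.false_eq_true, if_false, if_true, ite_true, ite_false,
      Nat.add_zero] at c0 c1
    have hn0 : S.IsNode (p ++ [false]) := by rw [IsNode, c0.1]; rfl
    have hn1 : S.IsNode (p ++ [true]) := by rw [IsNode, c1.1]; rfl
    have hne : ∀ b : Bool, p ≠ p ++ [b] := by simp
    have hd0 := hdeep (p ++ [false]) ⟨[false], rfl⟩ (hne false) hn0
    have hd1 := hdeep (p ++ [true]) ⟨[true], rfl⟩ (hne true) hn1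
    rw [S.itv_eq c0.1, c0.2, Finset.Icc_subset_Icc_iff hicc] at hd0
    rw [S.itv_eq c1.1, c1.2, Finset.Icc_subset_Icc_iff hicc] at hd1
    push_neg at hd0 hd1
    have hb1 : S.offset p + 1 ≤ u := hsub.1
    have hb2 : u + q - 1 ≤ S.offset p + (S.val i).length := hsub.2
    have hcu : u ≤ S.offset p + (S.val jk.1).length := by
      by_contra hcon
      push_neg at hcon
      have := hd1 (by omega)
      omega
    have hcq : S.offset p + (S.val jk.1).length + 1 ≤ u + q - 1 := by
      have := hd0 (by omega)
      omega
    have hv1 : (S.text.drop (S.offset p)).take (S.val jk.1).length = S.val jk.1 := by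
      have h := (S.nodeVar_spec c0.1).2
      rwa [c0.2] at h
    have hv2 : (S.text.drop (S.offset p + (S.val jk.1).length)).take
        (S.val jk.2).length = S.val jk.2 := by
      have h := (S.nodeVar_spec c1.1).2
      rwa [c1.2] at h
    have hT2 : S.offset p + (S.val jk.1).length + (S.val jk.2).length ≤
        S.text.length := by omega
    have ht : S.tstr q i = ssuf (S.val jk.1) (q - 1) ++ spre (S.val jk.2) (q - 1) := by
      simp only [tstr, hr]
    refine ⟨jk, by simp [hr], hb1, hcu, hcq, hb2, hspec.1, ?_⟩
    rw [ht, substr_append S.text (c := S.offset p + (S.val jk.1).length)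
      (by omega) (by omega) (by omega)]
    congr 1
    · rw [← hv1]
      simp only [ssuf]
      rw [List.length_take, List.length_drop]
      have hmin : min (S.val jk.1).length (S.text.length - S.offset p) =
          (S.val jk.1).length := by omega
      rw [hmin, List.drop_take, List.drop_drop, substr]
      have e1 : S.offset p + ((S.val jk.1).length - (q - 1)) =
          max (S.offset p + 1) (S.offset p + (S.val jk.1).length + 2 - q) - 1 := by
        omega
      have e2 : (S.val jk.1).length - ((S.val jk.1).length - (q - 1)) =
          S.offset p + (S.val jk.1).length + 1 -
            max (S.offset p + 1) (S.offset p + (S.val jk.1).length + 2 - q) := by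
        omega
      rw [e1, e2]
    · rw [← hv2]
      simp only [spre]
      rw [List.take_take, substr]
      have e1 : S.offset p + (S.val jk.1).length + 1 - 1 =
          S.offset p + (S.val jk.1).length := by omega
      have e2 : min (S.offset p + (S.val jk.1).length + q - 1)
            (S.offset p + (S.val i).length) + 1 -
            (S.offset p + (S.val jk.1).length + 1) =
          min (q - 1) (S.val jk.2).length := by omega
      rw [e1, e2]


lemma length_substr (T : List α) {a b : ℕ} (ha : 1 ≤ a) (hb : b ≤ T.length) :
    (substr T a b).length = b + 1 - a := by
  rw [substr, List.length_take, List.length_drop]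
  omega

lemma ssuf_substr (T : List α) {a b m : ℕ} (ha : 1 ≤ a) (hab : a ≤ b + 1)
    (hb : b ≤ T.length) (hm : m ≤ b + 1 - a) :
    ssuf (substr T a b) m = substr T (b + 1 - m) b := by
  simp only [ssuf]
  rw [length_substr T ha hb, substr, substr, List.drop_take, List.drop_drop]
  have e1 : (a - 1) + ((b + 1 - a) - m) = (b + 1 - m) - 1 := by omega
  have e2 : (b + 1 - a) - ((b + 1 - a) - m) = b + 1 - (b + 1 - m) := by omega
  rw [e1, e2]

lemma spre_substr (T : List α) {a b m : ℕ} (ha : 1 ≤ a) :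
    spre (substr T a b) m = substr T a (min (a + m - 1) b) := by
  simp only [spre, substr]
  rw [List.take_take]
  congr 1
  omega

lemma nbr_key (S : SLP α) {q : ℕ} (hq : 2 ≤ q) {i j : Fin S.n}
    (h : S.RightNbr q i j) :
    q ≤ (S.tstr q i).length ∧ q ≤ (S.tstr q j).length ∧
      ssuf (S.tstr q i) (q - 1) = spre (S.tstr q j) (q - 1) := by
  obtain ⟨hij, u, p, p', hu, huq, hsi, hvi, hsj, hvj⟩ := h
  have hsj' : S.Stabs p' (u + 1) ((u + 1) + q - 1) := by
    have e : (u + 1) + q - 1 = u + q := by omega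
    rw [e]; exact hsj
  obtain ⟨jki, hri, hb1i, hcui, hcqi, hb2i, hTi, hti⟩ := S.stab_window hq hu hsi hvi
  obtain ⟨jkj, hrj, hb1j, hcuj, hcqj, hb2j, hTj, htj⟩ :=
    S.stab_window hq (by omega) hsj' hvj
  have hmi : u + 1 ∈ S.itv p := by
    rw [S.itv_eq hvi, Finset.mem_Icc]; omega
  have hmj : u + 1 ∈ S.itv p' := by
    rw [S.itv_eq hvj, Finset.mem_Icc]; omega
  have hpp : p ≠ p' := by
    intro he
    rw [he, hvj] at hvi
    exact hij (Option.some_inj.mp hvi).symm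
  -- the two key numeric facts, proved by case analysis on nesting
  have key : min (S.offset p + (S.val jki.1).length + q - 1)
        (S.offset p + (S.val i).length) = u + q - 1 ∧
      max (S.offset p' + 1) (S.offset p' + (S.val jkj.1).length + 2 - q) = u + 1 := by
    rcases S.comparable hmi hmj with hpre | hpre
    · -- p is an ancestor of p'
      obtain ⟨s, rfl⟩ := hpre
      cases s with
      | nil => simp at hpp
      | cons b s₂ =>
        have hpre2 : p ++ [b] <+: p ++ b :: s₂ := ⟨s₂, by simp⟩
        obtain ⟨k, hk, hle1, hle2⟩ := S.nest hpre2 hvj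
        have cn := S.child_node hvi hri b
        rw [cn.1] at hk
        obtain rfl : (if b then jki.2 else jki.1) = k := Option.some_inj.mp hk
        cases b with
        | false =>
          exfalso
          simp only [Bool.false_eq_true, if_false, ite_false, Nat.add_zero] at hle2 cn
          rw [cn.2] at hle2
          omega
        | true =>
          simp only [if_true, ite_true] at hle1 cn
          rw [cn.2] at hle1
          omega
    · -- p' is an ancestor of p
      obtain ⟨s, rfl⟩ := hpre
      cases s with
      | nil => simp at hpp
      | cons b s₂ =>
        have hpre2 : p' ++ [b] <+: p' ++ b :: s₂ := ⟨s₂, by simp⟩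
        obtain ⟨k, hk, hle1, hle2⟩ := S.nest hpre2 hvi
        have cn := S.child_node hvj hrj b
        rw [cn.1] at hk
        obtain rfl : (if b then jkj.2 else jkj.1) = k := Option.some_inj.mp hk
        cases b with
        | true =>
          exfalso
          simp only [if_true, ite_true] at hle1 cn
          rw [cn.2] at hle1
          omega
        | false =>
          simp only [Bool.false_eq_true, if_false, ite_false, Nat.add_zero] at hle2 cn
          rw [cn.2] at hle2
          omega
  rw [key.1] at hti
  rw [key.2] at htj
  have hfact3 : u + q ≤ min (S.offset p' + (S.val jkj.1).length + q - 1)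
      (S.offset p' + (S.val j).length) := by omega
  have hfact4 : max (S.offset p + 1) (S.offset p + (S.val jki.1).length + 2 - q)
      ≤ u := by omega
  have hEj : min (S.offset p' + (S.val jkj.1).length + q - 1)
      (S.offset p' + (S.val j).length) ≤ S.text.length := by omega
  refine ⟨?_, ?_, ?_⟩
  · rw [hti, length_substr _ (by omega) (by omega)]
    omega
  · rw [htj, length_substr _ (by omega) hEj]
    omega
  · rw [hti, htj, ssuf_substr _ (by omega) (by omega) (by omega) (by omega),
      spre_substr _ (by omega)]
    have e1 : u + q - 1 + 1 - (q - 1) = u + 1 := by omega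
    have e2 : min (u + 1 + (q - 1) - 1) (min (S.offset p' + (S.val jkj.1).length + q - 1)
        (S.offset p' + (S.val j).length)) = u + q - 1 := by omega
    rw [e1, e2]


lemma base_key (S : SLP α) {q : ℕ} (hq : 2 ≤ q) {p : List Bool} {i : Fin S.n}
    (hs : S.Stabs p 1 q) (hv : S.nodeVar p = some i) :
    q ≤ (S.tstr q i).length ∧ spre (S.tstr q i) (q - 1) = substr S.text 1 (q - 1) := by
  have hs' : S.Stabs p 1 (1 + q - 1) := by
    have e : 1 + q - 1 = q := by omega
    rw [e]; exact hs
  obtain ⟨jk, hr, hb1, hcu, hcq, hb2, hT, ht⟩ := S.stab_window hq le_rfl hs' hv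
  have hstart : max (S.offset p + 1) (S.offset p + (S.val jk.1).length + 2 - q)
      = 1 := by omega
  rw [hstart] at ht
  have hE : q ≤ min (S.offset p + (S.val jk.1).length + q - 1)
      (S.offset p + (S.val i).length) := by omega
  have hET : min (S.offset p + (S.val jk.1).length + q - 1)
      (S.offset p + (S.val i).length) ≤ S.text.length := by omega
  constructor
  · rw [ht, length_substr _ le_rfl hET]
    omega
  · rw [ht, spre_substr _ le_rfl]
    congr 1
    omega

lemma ssuf_append_right (A B : List α) {n : ℕ} (h : n ≤ B.length) :
    ssuf (A ++ B) n = ssuf B n := by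
  simp only [ssuf, List.length_append]
  have e : A.length + B.length - n = A.length + (B.length - n) := by omega
  rw [e, List.drop_length_add_append]

lemma mem_Occ_iff [DecidableEq α] {T P : List α} {q k : ℕ} (hP : P.length = q)
    (hq : 1 ≤ q) (hk : 1 ≤ k) :
    k ∈ Occ T P ↔ k + q - 1 ≤ T.length ∧ (T.drop (k - 1)).take q = P := by
  rw [Occ, Finset.mem_filter, Finset.mem_Icc, substr, hP]
  have e : k + q - 1 + 1 - k = q := by omega
  rw [e]
  constructor
  · rintro ⟨⟨_, hk2⟩, hm⟩
    refine ⟨?_, hm⟩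
    have hl := congrArg List.length hm
    rw [List.length_take, List.length_drop, hP] at hl
    omega
  · rintro ⟨hle, hm⟩
    exact ⟨⟨hk, by omega⟩, hm⟩

lemma count_window [DecidableEq α] {q : ℕ} (hq : 2 ≤ q) (V X Y P : List α)
    (hP : P.length = q) (hV : q - 1 ≤ V.length) :
    ((Occ (V ++ (X ++ Y)) P).filter
        (fun k => k + q - 1 ∈ Finset.Icc (V.length + 1) (V.length + X.length))).card
      = (Occ (ssuf V (q - 1) ++ X) P).card := by
  set t := ssuf V (q - 1) ++ X with hts
  set d := V.length - (q - 1) with hd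
  have hss : ssuf V (q - 1) = V.drop d := by simp only [ssuf, hd]
  have htl : t.length = (q - 1) + X.length := by
    rw [hts, List.length_append, hss, List.length_drop]
    omega
  have hsplit : V ++ (X ++ Y) = V.take d ++ (t ++ Y) := by
    rw [hts, hss]
    conv_rhs => rw [List.append_assoc, ← List.append_assoc (V.take d),
      List.take_append_drop]
  have hdl : (V.take d).length = d := by rw [List.length_take]; omega
  have hmatch : ∀ k' : ℕ, 1 ≤ k' → k' + q - 1 ≤ t.length →
      ((V ++ (X ++ Y)).drop (k' + d - 1)).take q = (t.drop (k' - 1)).take q := by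
    intro k' h1 h2
    rw [hsplit]
    have e : k' + d - 1 = (V.take d).length + (k' - 1) := by omega
    rw [e, List.drop_length_add_append, List.drop_append_of_le_length (by omega),
      List.take_append_of_le_length (by rw [List.length_drop]; omega)]
  symm
  rw [← Finset.card_map ⟨fun k => k + d, add_left_injective d⟩]
  congr 1
  ext k
  simp only [Finset.mem_map, Function.Embedding.coeFn_mk, Finset.mem_filter,
    Finset.mem_Icc]
  constructor
  · rintro ⟨k', hk', rfl⟩
    have hk'1 : 1 ≤ k' := by
      rw [Occ, Finset.mem_filter, Finset.mem_Icc] at hk'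
      exact hk'.1.1
    rw [mem_Occ_iff hP (by omega) hk'1] at hk'
    obtain ⟨hlen, hm⟩ := hk'
    refine ⟨?_, by omega, by omega⟩
    rw [mem_Occ_iff hP (by omega) (by omega)]
    constructor
    · rw [List.length_append, List.length_append]
      omega
    · rw [hmatch k' hk'1 hlen]
      exact hm
  · rintro ⟨hk, hlow, hhigh⟩
    have hk1 : 1 ≤ k ∧ k ≤ (V ++ (X ++ Y)).length := by
      rw [Occ, Finset.mem_filter, Finset.mem_Icc] at hk
      exact hk.1
    rw [mem_Occ_iff hP (by omega) hk1.1] at hk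
    have hkd : 1 ≤ k - d := by omega
    refine ⟨k - d, ?_, by omega⟩
    rw [mem_Occ_iff hP (by omega) hkd]
    constructor
    · omega
    · have hmm := hmatch (k - d) hkd (by omega)
      have e : k - d + d - 1 = k - 1 := by omega
      rw [e] at hmm
      rw [← hmm]
      exact hk.2


lemma ssuf_append_ssuf (A B : List α) (n : ℕ) :
    ssuf (A ++ B) n = ssuf (ssuf A n ++ B) n := by
  rcases le_or_gt n A.length with h | h
  · conv_lhs => rw [← List.take_append_drop (A.length - n) A, List.append_assoc]
    rw [show A.drop (A.length - n) = ssuf A n from rfl]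
    exact ssuf_append_right _ _
      (by rw [List.length_append]; simp only [ssuf]; rw [List.length_drop]; omega)
  · rw [show ssuf A n = A from by
      simp only [ssuf]; rw [Nat.sub_eq_zero_of_le (le_of_lt h), List.drop_zero]]

end SLP
/-- Lemma 7 of the paper: for a directed path
`X_{i₁}, …, X_{i_m}` in the right `q`-gram neighbor graph starting at the
variable stabbing `[1:q]`, consider
`W = T([1:q-1]) label(X_{i₁}) ⋯ label(X_{i_m})` with `B_j` the block of
positions of `label(X_{i_j})` in `W`.  Then for every `q`-gram `P` and every
`j`, the number of occurrences of `P` in `W` ending in `B_j` equals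
`|Occ(t_{i_j},P)|`; consequently the `vOcc`-weighted `q`-gram frequencies on
`W` equal the weighted `q`-gram frequencies of the strings `t_{i_j}`. -/
theorem stmt10 {α : Type} [DecidableEq α] (q : ℕ) (hq : 2 ≤ q) (S : SLP α)
    (hT : q ≤ S.text.length)
    (m : ℕ) (hm : 1 ≤ m) (idx : ℕ → Fin S.n)
    (p : List Bool) (hstab : S.Stabs p 1 q) (hvar : S.nodeVar p = some (idx 1))
    (hnbr : ∀ j, 2 ≤ j → j ≤ m → S.RightNbr q (idx (j - 1)) (idx j))
    (W : List α)
    (hW : W = SLP.substr S.text 1 (q - 1) ++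
      (List.range m).flatMap (fun k => S.labelStr q (idx (k + 1))))
    (B : ℕ → Finset ℕ)
    (hB : ∀ j, B j = Finset.Icc
      ((q - 1) + (∑ t ∈ Finset.Ico 1 j, (S.labelStr q (idx t)).length) + 1)
      ((q - 1) + ∑ t ∈ Finset.Icc 1 j, (S.labelStr q (idx t)).length))
    (P : List α) (hP : P.length = q) :
    (∀ j, 1 ≤ j → j ≤ m →
      ((SLP.Occ W P).filter (fun k => k + q - 1 ∈ B j)).card
        = (SLP.Occ (S.tstr q (idx j)) P).card) ∧
    (∑ j ∈ Finset.Icc 1 m, S.vOcc (idx j) *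
        ((SLP.Occ W P).filter (fun k => k + q - 1 ∈ B j)).card
      = ∑ j ∈ Finset.Icc 1 m, S.vOcc (idx j) *
          (SLP.Occ (S.tstr q (idx j)) P).card) := by
  subst hW
  have hq1len : (SLP.substr S.text 1 (q - 1)).length = q - 1 := by
    rw [SLP.substr, List.length_take, List.length_drop]
    omega
  have hVapp : ∀ j : ℕ, 1 ≤ j →
      (List.range (j + 1 - 1)).flatMap (fun k => S.labelStr q (idx (k + 1)))
        = (List.range (j - 1)).flatMap (fun k => S.labelStr q (idx (k + 1)))
          ++ S.labelStr q (idx j) := by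
    intro j hj
    have e2 : j + 1 - 1 = (j - 1) + 1 := by omega
    have e3 : j - 1 + 1 = j := by omega
    rw [e2, List.range_succ, List.flatMap_append]
    simp only [List.flatMap_cons, List.flatMap_nil, List.append_nil]
    rw [e3]
  have hINV : ∀ j, 1 ≤ j → j ≤ m →
      SLP.ssuf (SLP.substr S.text 1 (q - 1) ++ (List.range (j - 1)).flatMap
          (fun k => S.labelStr q (idx (k + 1)))) (q - 1) ++ S.labelStr q (idx j)
        = S.tstr q (idx j) := by
    intro j h1
    induction j, h1 using Nat.le_induction with
    | base =>
      intro _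
      simp only [Nat.sub_self, List.range_zero, List.flatMap_nil, List.append_nil]
      have hl : SLP.ssuf (SLP.substr S.text 1 (q - 1)) (q - 1)
          = SLP.substr S.text 1 (q - 1) := by
        simp only [SLP.ssuf]
        rw [hq1len, Nat.sub_self, List.drop_zero]
      rw [hl, ← (S.base_key hq hstab hvar).2]
      exact List.take_append_drop _ _
    | succ j hj ih =>
      intro hjm
      have ihI := ih (by omega)
      rw [hVapp j hj, ← List.append_assoc, SLP.ssuf_append_ssuf, ihI]
      have hnb := hnbr (j + 1) (by omega) hjm
      rw [show j + 1 - 1 = j from by omega] at hnb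
      rw [(S.nbr_key hq hnb).2.2]
      exact List.take_append_drop _ _
  have hsplit : ∀ j, 1 ≤ j → j ≤ m →
      (List.range m).flatMap (fun k => S.labelStr q (idx (k + 1)))
        = (List.range (j - 1)).flatMap (fun k => S.labelStr q (idx (k + 1)))
          ++ (S.labelStr q (idx j)
            ++ (List.range' j (m - j)).flatMap (fun k => S.labelStr q (idx (k + 1)))) := by
    intro j hj
    induction j, hj using Nat.le_induction with
    | base =>
      intro _
      simp only [Nat.sub_self, List.range_zero, List.flatMap_nil, List.nil_append]
      rw [List.range_eq_range']
      have h0 : List.range' 0 m = 0 :: List.range' 1 (m - 1) := by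
        conv_lhs => rw [show m = (m - 1) + 1 from by omega]
        rw [List.range'_succ]
      rw [h0, List.flatMap_cons]
    | succ j hj ih =>
      intro hjm
      rw [ih (by omega)]
      have h1 : List.range' j (m - j) = j :: List.range' (j + 1) (m - (j + 1)) := by
        conv_lhs => rw [show m - j = (m - (j + 1)) + 1 from by omega]
        rw [List.range'_succ]
      rw [h1, List.flatMap_cons, hVapp j (by omega)]
      simp [List.append_assoc]
  have hVlen : ∀ j : ℕ,
      (SLP.substr S.text 1 (q - 1) ++ (List.range (j - 1)).flatMap
          (fun k => S.labelStr q (idx (k + 1)))).length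
        = (q - 1) + ∑ t ∈ Finset.Ico 1 j, (S.labelStr q (idx t)).length := by
    intro j
    rw [List.length_append, hq1len, List.length_flatMap]
    congr 1
    rw [Finset.sum_Ico_eq_sum_range]
    rw [show ((List.range (j - 1)).map fun x => (S.labelStr q (idx (x + 1))).length).sum
        = ∑ i ∈ Finset.range (j - 1), (S.labelStr q (idx (i + 1))).length from rfl]
    exact Finset.sum_congr rfl fun i _ => by rw [Nat.add_comm 1 i]
  have hBe : ∀ j, 1 ≤ j → B j = Finset.Icc
      ((SLP.substr S.text 1 (q - 1) ++ (List.range (j - 1)).flatMap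
          (fun k => S.labelStr q (idx (k + 1)))).length + 1)
      ((SLP.substr S.text 1 (q - 1) ++ (List.range (j - 1)).flatMap
          (fun k => S.labelStr q (idx (k + 1)))).length
        + (S.labelStr q (idx j)).length) := by
    intro j hj
    rw [hB j, hVlen j]
    have hs : ∑ t ∈ Finset.Icc 1 j, (S.labelStr q (idx t)).length
        = (∑ t ∈ Finset.Ico 1 j, (S.labelStr q (idx t)).length)
          + (S.labelStr q (idx j)).length := by
      rw [← Finset.Ico_add_one_right_eq_Icc, Finset.sum_Ico_succ_top hj]
    congr 1
    omega
  have main : ∀ j, 1 ≤ j → j ≤ m →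
      ((SLP.Occ (SLP.substr S.text 1 (q - 1) ++ (List.range m).flatMap
          (fun k => S.labelStr q (idx (k + 1)))) P).filter
        (fun k => k + q - 1 ∈ B j)).card = (SLP.Occ (S.tstr q (idx j)) P).card := by
    intro j h1 h2
    rw [hsplit j h1 h2, ← List.append_assoc, hBe j h1,
      SLP.count_window hq _ _ _ _ hP (by rw [hVlen j]; omega), hINV j h1 h2]
  exact ⟨main, Finset.sum_congr rfl fun j hj => by
    rw [Finset.mem_Icc] at hj
    rw [main j hj.1 hj.2]⟩
end

section
/- Let q ≥ 2 and let 𝒯 = {X_1 → expr_1, …, X_n → expr_n} be an SLP representing T with |T| ≥ q. Then |T| - (q-1) = Σ vOcc(X_i) · (|t_i| - (q-1)), where the sum ranges over all i such that X_i has a nonterminal rule and |val(X_i)| ≥ q. -/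
namespace SLP

variable {α : Type}

lemma occsFrom_inl (S : SLP α) {i : Fin S.n} {a : α} (h : S.rule i = Sum.inl a) :
    S.occsFrom i = {i} := by
  conv_lhs => rw [SLP.occsFrom]
  split <;> simp_all

lemma occsFrom_inr (S : SLP α) {i : Fin S.n} {jk : Fin S.n × Fin S.n}
    (h : S.rule i = Sum.inr jk) :
    S.occsFrom i = i ::ₘ (S.occsFrom jk.1 + S.occsFrom jk.2) := by
  conv_lhs => rw [SLP.occsFrom]
  split
  · simp_all
  · rename_i jk' heq; rw [h] at heq; cases heq; rfl

lemma tstr_len (S : SLP α) (q : ℕ) {i : Fin S.n} {jk : Fin S.n × Fin S.n}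
    (h : S.rule i = Sum.inr jk) :
    (S.tstr q i).length =
      min (S.val jk.1).length (q - 1) + min (q - 1) (S.val jk.2).length := by
  unfold SLP.tstr; rw [h]; simp [SLP.ssuf, SLP.spre]; omega

lemma key (q : ℕ) (hq : 2 ≤ q) (S : SLP α) (i : Fin S.n) :
    (S.val i).length - (q - 1) =
      ((S.occsFrom i).map (fun j =>
        if (S.rule j).isRight = true ∧ q ≤ (S.val j).length then
          (S.tstr q j).length - (q - 1) else 0)).sum := by
  match h : S.rule i with
  | Sum.inl a =>
    rw [S.val_inl h, S.occsFrom_inl h]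
    simp [h]
    omega
  | Sum.inr jk =>
    have h1 := (S.wf i jk h).1
    have h2 := (S.wf i jk h).2
    have IH1 := key q hq S jk.1
    have IH2 := key q hq S jk.2
    rw [S.val_inr h, S.occsFrom_inr h]
    simp only [Multiset.map_cons, Multiset.sum_cons, Multiset.map_add,
      Multiset.sum_add, List.length_append]
    rw [← IH1, ← IH2, S.val_inr h, List.length_append, tstr_len S q h]
    by_cases hc : q ≤ (S.val jk.1).length + (S.val jk.2).length
    · rw [if_pos ⟨by simp [h], hc⟩]; omega
    · rw [if_neg (fun hy => hc hy.2)]; omega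
termination_by i.val

end SLP

/-- `|T| - (q-1) = Σ vOcc(X_i)·(|t_i| - (q-1))`, the sum
ranging over nonterminal variables with `|val(X_i)| ≥ q`. -/
theorem stmt11 {α : Type} (q : ℕ) (hq : 2 ≤ q) (S : SLP α)
    (hT : q ≤ S.text.length) :
    S.text.length - (q - 1) =
      ∑ i ∈ Finset.univ.filter
          (fun i : Fin S.n => (S.rule i).isRight = true ∧ q ≤ (S.val i).length),
        S.vOcc i * ((S.tstr q i).length - (q - 1)) := by
  have hk := SLP.key q hq S S.lastIdx
  rw [SLP.text, hk, Finset.sum_multiset_map_count]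
  rw [Finset.sum_subset (Finset.subset_univ _)
    (by intro x _ hx
        rw [Multiset.count_eq_zero_of_notMem (by simpa using hx), zero_smul])]
  rw [Finset.sum_filter]
  refine Finset.sum_congr rfl fun i _ => ?_
  by_cases hP : (S.rule i).isRight = true ∧ q ≤ (S.val i).length
  · rw [if_pos hP, if_pos hP, smul_eq_mul, SLP.vOcc]
  · rw [if_neg hP, if_neg hP, smul_eq_mul, mul_zero]
end

section
/- Let q ≥ 2 and let 𝒯 = {X_1 → expr_1, …, X_n → expr_n} be an SLP representing T with |T| ≥ q. Then the number of distinct strings P of length q with Occ(T,P) ≠ ∅ is at most Σ {|t_i| - (q-1) : X_i has a nonterminal rule and |val(X_i)| ≥ q}, which is in turn at most (q-1)·n. -/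
namespace SLPAux
open SLP

variable {α : Type}

theorem val_inl (S : SLP α) {i : Fin S.n} {a : α} (h : S.rule i = Sum.inl a) :
    S.val i = [a] := by
  rw [SLP.val]; split <;> simp_all

theorem val_inr (S : SLP α) {i : Fin S.n} {jk : Fin S.n × Fin S.n}
    (h : S.rule i = Sum.inr jk) :
    S.val i = S.val jk.1 ++ S.val jk.2 := by
  rw [SLP.val]; split <;> simp_all

theorem tstr_len (S : SLP α) (q : ℕ) {i : Fin S.n} {jk : Fin S.n × Fin S.n}
    (h : S.rule i = Sum.inr jk) :
    (S.tstr q i).length =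
      min (q - 1) (S.val jk.1).length + min (q - 1) (S.val jk.2).length := by
  simp only [SLP.tstr, h, List.length_append, SLP.ssuf, SLP.spre,
    List.length_drop, List.length_take]
  omega

theorem key (S : SLP α) (q : ℕ) (hq : 2 ≤ q) :
    ∀ m : ℕ, ∀ i : Fin S.n, i.val = m → ∀ p, p + q ≤ (S.val i).length →
    ∃ j : Fin S.n, ∃ pos : ℕ, (S.rule j).isRight = true ∧ q ≤ (S.val j).length ∧
      pos + q ≤ (S.tstr q j).length ∧
      ((S.tstr q j).drop pos).take q = ((S.val i).drop p).take q := by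
  intro m
  induction m using Nat.strong_induction_on with
  | _ m ih =>
    intro i him p hp
    cases hr : S.rule i with
    | inl a =>
      rw [val_inl S hr] at hp
      simp at hp; omega
    | inr jk =>
      have hval := val_inr S hr
      rw [hval, List.length_append] at hp
      by_cases h1 : p + q ≤ (S.val jk.1).length
      · obtain ⟨j, pos, hj1, hj2, hj3, hj4⟩ :=
          ih jk.1.val (him ▸ (S.wf i jk hr).1) jk.1 rfl p h1
        refine ⟨j, pos, hj1, hj2, hj3, ?_⟩
        rw [hj4, hval, List.drop_append,
          List.take_append]
        have h0 : q - ((S.val jk.1).drop p).length = 0 := by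
          rw [List.length_drop]; omega
        rw [h0, List.take_zero, List.append_nil]
      · by_cases h2 : (S.val jk.1).length ≤ p
        · obtain ⟨j, pos, hj1, hj2, hj3, hj4⟩ :=
            ih jk.2.val (him ▸ (S.wf i jk hr).2) jk.2 rfl
              (p - (S.val jk.1).length) (by omega)
          refine ⟨j, pos, hj1, hj2, hj3, ?_⟩
          rw [hj4, hval, List.drop_append,
            List.drop_of_length_le h2]
          simp
        · -- crossing case
          push_neg at h1 h2
          refine ⟨i, p - ((S.val jk.1).length - (q - 1)), by simp [hr],
            by rw [hval]; simp; omega, ?_, ?_⟩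
          · rw [tstr_len S q hr]; omega
          · have htstr : S.tstr q i =
                (S.val jk.1).drop ((S.val jk.1).length - (q-1)) ++
                  (S.val jk.2).take (q-1) := by
              simp [SLP.tstr, hr, SLP.ssuf, SLP.spre]
            rw [htstr, hval]
            rw [List.drop_append, List.drop_append,
              List.drop_drop, List.take_append,
              List.take_append]
            have e1 : (S.val jk.1).length - (q - 1) +
                (p - ((S.val jk.1).length - (q - 1))) = p := by omega
            rw [e1]
            have e2 : p - ((S.val jk.1).length - (q-1)) -
                ((S.val jk.1).drop ((S.val jk.1).length - (q-1))).length = 0 := by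
              rw [List.length_drop]; omega
            have e3 : p - (S.val jk.1).length = 0 := by omega
            rw [e2, e3, List.drop_zero, List.drop_zero]
            have e4 : ((S.val jk.1).drop p).length = (S.val jk.1).length - p :=
              List.length_drop ..
            rw [List.take_of_length_le (by omega : ((S.val jk.1).drop p).length ≤ q)]
            rw [List.take_take]
            congr 2
            omega

end SLPAux
/-- the number of distinct `q`-grams occurring in `T` is at
most `Σ (|t_i| - (q-1))` (over nonterminal variables with `|val(X_i)| ≥ q`),
which is at most `(q-1)·n`. -/
theorem stmt15 {α : Type} [DecidableEq α] (q : ℕ) (hq : 2 ≤ q) (S : SLP α)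
    (hT : q ≤ S.text.length) :
    Set.ncard {P : List α | P.length = q ∧ (SLP.Occ S.text P).Nonempty}
      ≤ (∑ i ∈ Finset.univ.filter
          (fun i : Fin S.n => (S.rule i).isRight = true ∧ q ≤ (S.val i).length),
          ((S.tstr q i).length - (q - 1))) ∧
    (∑ i ∈ Finset.univ.filter
        (fun i : Fin S.n => (S.rule i).isRight = true ∧ q ≤ (S.val i).length),
        ((S.tstr q i).length - (q - 1))) ≤ (q - 1) * S.n := by
  classical
  set s := Finset.univ.filter
      (fun i : Fin S.n => (S.rule i).isRight = true ∧ q ≤ (S.val i).length) with hs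
  constructor
  · set t := s.sigma (fun i => Finset.range ((S.tstr q i).length - (q - 1))) with ht
    set g : ((_ : Fin S.n) × ℕ) → List α :=
      fun x => ((S.tstr q x.1).drop x.2).take q with hg
    have hsub : {P : List α | P.length = q ∧ (SLP.Occ S.text P).Nonempty}
        ⊆ ↑(t.image g) := by
      rintro P ⟨hPlen, k, hk⟩
      simp only [SLP.Occ, Finset.mem_filter, Finset.mem_Icc] at hk
      obtain ⟨⟨hk1, hk2⟩, hk3⟩ := hk
      have hsubeq : (S.text.drop (k - 1)).take q = P := by
        rw [← hk3, SLP.substr, hPlen]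
        congr 1
        omega
      have hlen : (k - 1) + q ≤ S.text.length := by
        have := congrArg List.length hsubeq
        rw [List.length_take, List.length_drop, hPlen] at this
        omega
      obtain ⟨j, pos, hj1, hj2, hj3, hj4⟩ :=
        SLPAux.key S q hq S.lastIdx.val S.lastIdx rfl (k - 1) hlen
      have hPeq : g ⟨j, pos⟩ = P := by
        rw [hg]; exact hj4.trans hsubeq
      simp only [Finset.coe_image, Set.mem_image, Finset.mem_coe]
      refine ⟨⟨j, pos⟩, ?_, hPeq⟩
      rw [ht]
      rw [Finset.mem_sigma]
      exact ⟨by simp [hs, hj1, hj2], Finset.mem_range.mpr (by omega : pos < (S.tstr q j).length - (q - 1))⟩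
    have h1 := Set.ncard_le_ncard hsub (Finset.finite_toSet _)
    rw [Set.ncard_coe_finset] at h1
    refine h1.trans (Finset.card_image_le.trans ?_)
    rw [ht, Finset.card_sigma]
    simp
  · have hbd : ∀ i ∈ s, (S.tstr q i).length - (q - 1) ≤ q - 1 := by
      intro i hi
      rw [hs, Finset.mem_filter] at hi
      obtain ⟨-, hi1, -⟩ := hi
      cases hr : S.rule i with
      | inl a => rw [hr] at hi1; simp at hi1
      | inr jk => rw [SLPAux.tstr_len S q hr]; omega
    calc ∑ i ∈ s, ((S.tstr q i).length - (q - 1)) ≤ ∑ _i ∈ s, (q - 1) :=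
          Finset.sum_le_sum hbd
      _ = s.card * (q - 1) := by rw [Finset.sum_const, smul_eq_mul]
      _ ≤ S.n * (q - 1) := by
          have := s.card_le_univ
          rw [Fintype.card_fin] at this
          exact Nat.mul_le_mul_right _ this
      _ = (q - 1) * S.n := Nat.mul_comm ..
end
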